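/- Let X be a P-space and let Y be a topological space that is either Lindelöf or second-countable. Then the projection π_X : X × Y → X is a closed map. -/
import Mathlib


open Set

/-- `X` is a P-space: every countable intersection of open sets is open. -/
def IsPSpace (X : Type*) [TopologicalSpace X] : Prop :=
  ∀ F : Set (Set X), F.Countable → (∀ U ∈ F, IsOpen U) → IsOpen (⋂₀ F)

theorem stmt17 {X Y : Type*} [TopologicalSpace X] [TopologicalSpace Y]
    (hX : IsPSpace X)
    (hY : LindelofSpace Y ∨ SecondCountableTopology Y) :
    IsClosedMap (Prod.fst : X × Y → X) := by
  have hL : LindelofSpace Y := by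
    rcases hY with h | h
    · exact h
    · exact inferInstance
  intro C hC
  rw [← isOpen_compl_iff, isOpen_iff_forall_mem_open]
  intro x hx
  have h1 : ∀ y : Y, ∃ U V : Set _, IsOpen U ∧ IsOpen V ∧ x ∈ U ∧ y ∈ V ∧
      U ×ˢ V ⊆ Cᶜ := by
    intro y
    have hxy : (x, y) ∈ Cᶜ := fun h => hx ⟨(x, y), h, rfl⟩
    rcases isOpen_prod_iff.1 hC.isOpen_compl x y hxy with
      ⟨U, V, hU, hV, hxU, hyV, hsub⟩
    exact ⟨U, V, hU, hV, hxU, hyV, hsub⟩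
  choose U V hU hV hxU hyV hsub using h1
  have hcover : (univ : Set Y) ⊆ ⋃ y, V y := fun y _ => mem_iUnion.2 ⟨y, hyV y⟩
  obtain ⟨t, htc, htcov⟩ := isLindelof_univ.elim_countable_subcover V hV hcover
  refine ⟨⋂ y ∈ t, U y, ?_, ?_, ?_⟩
  · intro x' hx' hx'im
    rcases hx'im with ⟨⟨a, b⟩, hab, rfl⟩
    rcases mem_iUnion₂.1 (htcov (mem_univ b)) with ⟨y, hyt, hbV⟩
    exact hsub y ⟨mem_iInter₂.1 hx' y hyt, hbV⟩ hab
  · have := hX (U '' t) (htc.image U) (by rintro _ ⟨y, _, rfl⟩; exact hU y)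
    rwa [sInter_image] at this
  · exact mem_iInter₂.2 fun y _ => hxU y
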